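/- Let α > 1/2, 1 < p < 2, β = p/((2-p)(2α-1)), and let S ⊆ ℕ satisfy ∑_{n ∈ S} 1/d(n)^{p/(2-p)} < ∞. Let x ∈ ℓ^2 be supported on S with |x_n| ≤ 1 for all n. Define γ_n = ∑_{d ∣ n, n/d ∈ S, d ≥ d(n)^β} x_{n/d}/d^α. Then γ ∈ ℓ^2. -/

import Mathlib

open Finset

lemma tail_sum (e : ℝ) (he : 1 < e) (q : ℕ) (hq : 1 ≤ q) (F : Finset ℕ)
    (hF : ∀ j ∈ F, q ≤ j) :
    ∑ j ∈ F, (j : ℝ) ^ (-e) ≤ (1 + 1 / (e - 1)) * (q : ℝ) ^ (1 - e) := by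
  have hqR : (1:ℝ) ≤ (q:ℝ) := by exact_mod_cast hq
  have hqpos : (0:ℝ) < q := by linarith
  have he1 : (0:ℝ) < 1/(e-1) := one_div_pos.mpr (by linarith)
  have hC : (0:ℝ) ≤ 1 + 1/(e-1) := by linarith
  have hrhs : (0:ℝ) ≤ (1 + 1/(e-1)) * (q:ℝ) ^ (1-e) :=
    mul_nonneg hC (Real.rpow_nonneg hqpos.le _)
  set N := F.sup id with hN
  have hFN : ∀ j ∈ F, j ≤ N := fun j hj => le_sup (f := id) hj
  have hsub : F ⊆ Finset.Icc q N := fun j hj => Finset.mem_Icc.2 ⟨hF j hj, hFN j hj⟩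
  have h1 : ∑ j ∈ F, (j:ℝ)^(-e) ≤ ∑ j ∈ Finset.Icc q N, (j:ℝ)^(-e) := by
    apply Finset.sum_le_sum_of_subset_of_nonneg hsub
    intro i _ _; positivity
  rcases Finset.eq_empty_or_nonempty F with hFe | hFne
  · simpa [hFe] using hrhs
  have hqN : q ≤ N := by
    obtain ⟨j, hj⟩ := hFne
    exact le_trans (hF j hj) (hFN j hj)
  have h2 : ∑ j ∈ Finset.Icc q N, (j:ℝ)^(-e)
      = (q:ℝ)^(-e) + ∑ j ∈ Finset.Ioc q N, (j:ℝ)^(-e) := by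
    rw [← Finset.sum_erase_add _ _ (Finset.mem_Icc.2 ⟨le_refl q, hqN⟩), add_comm,
      Finset.Icc_erase_left]
  have h3 : ∑ j ∈ Finset.Ioc q N, (j:ℝ)^(-e) ≤ (q:ℝ)^(1-e) / (e-1) := by
    have hre : ∑ j ∈ Finset.Ioc q N, (j:ℝ)^(-e)
        = ∑ i ∈ Finset.range (N - q), ((q:ℝ) + ((i+1:ℕ):ℝ)) ^ (-e) := by
      rw [← Finset.Icc_add_one_left_eq_Ioc, ← Finset.Ico_add_one_right_eq_Icc, Finset.sum_Ico_eq_sum_range]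
      have hc : N + 1 - (q+1) = N - q := by omega
      rw [hc]
      apply Finset.sum_congr rfl
      intro i _
      congr 1
      push_cast
      ring
    rw [hre]
    have hanti : AntitoneOn (fun t : ℝ => t ^ (-e)) (Set.Icc (q:ℝ) ((q:ℝ) + ((N - q : ℕ):ℝ))) := by
      intro s hs t ht hst
      have hs0 : (0:ℝ) < s := lt_of_lt_of_le hqpos hs.1
      exact Real.rpow_le_rpow_of_nonpos hs0 hst (by linarith)
    refine le_trans hanti.sum_le_integral ?_
    have h0 : (0:ℝ) ∉ Set.uIcc (q:ℝ) ((q:ℝ) + ((N - q : ℕ):ℝ)) := by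
      rw [Set.uIcc_of_le (le_add_of_nonneg_right (Nat.cast_nonneg _))]
      intro h
      exact absurd h.1 (by linarith)
    rw [integral_rpow (Or.inr ⟨by linarith, h0⟩)]
    have hb : (0:ℝ) ≤ ((q:ℝ) + ((N - q : ℕ):ℝ)) ^ (-(e-1)) := Real.rpow_nonneg (by positivity) _
    rw [show (-e+1) = -(e-1) by ring, show (1:ℝ)-e = -(e-1) by ring, div_neg, ← neg_div,
      neg_sub]
    gcongr
    · linarith
  calc ∑ j ∈ F, (j:ℝ)^(-e) ≤ (q:ℝ)^(-e) + ∑ j ∈ Finset.Ioc q N, (j:ℝ)^(-e) := by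
        rw [← h2]; exact h1
    _ ≤ (q:ℝ)^(1-e) + (q:ℝ)^(1-e)/(e-1) := by
        have : (q:ℝ)^(-e) ≤ (q:ℝ)^(1-e) :=
          Real.rpow_le_rpow_of_exponent_le hqR (by linarith)
        linarith [h3]
    _ = (1 + 1/(e-1)) * (q:ℝ)^(1-e) := by ring

lemma core_sum (α β κ : ℝ) (hα : 1/2 < α) (hβpos : 0 < β) (hκ : κ = β*(2*α-1))
    (m1 m2 M : ℕ) (hm1 : 0 < m1) (hm12 : m1 ≤ m2) (hM : 1 ≤ M)
    (F : Finset ℕ)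
    (hF : ∀ n ∈ F, 0 < n ∧ m1 ∣ n ∧ m2 ∣ n ∧ (M:ℝ)^β * m2 ≤ (n:ℝ)) :
    ∑ n ∈ F, (m1:ℝ)^α * (m2:ℝ)^α * (n:ℝ)^(-(2*α)) ≤
      (1 + 1/(2*α-1)) * (M:ℝ)^(-κ) := by
  have hm2 : 0 < m2 := lt_of_lt_of_le hm1 hm12
  set g := Nat.gcd m1 m2 with hgdef
  set L := Nat.lcm m1 m2 with hLdef
  have hg : 0 < g := Nat.gcd_pos_of_pos_left _ hm1
  have hL : 0 < L := Nat.lcm_pos hm1 hm2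
  have hgL : (g:ℝ) * (L:ℝ) = (m1:ℝ) * m2 := by exact_mod_cast congrArg (Nat.cast (R := ℝ)) (Nat.gcd_mul_lcm m1 m2)
  have hgm1 : g ≤ m1 := Nat.le_of_dvd hm1 (Nat.gcd_dvd_left _ _)
  -- positivity of casts
  have hm1R : (0:ℝ) < m1 := by exact_mod_cast hm1
  have hm2R : (0:ℝ) < m2 := by exact_mod_cast hm2
  have hgR : (0:ℝ) < g := by exact_mod_cast hg
  have hLR : (0:ℝ) < L := by exact_mod_cast hL
  have hMR : (1:ℝ) ≤ (M:ℝ) := by exact_mod_cast hM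
  have hMR0 : (0:ℝ) < M := by linarith
  have hMβ : (0:ℝ) < (M:ℝ)^β := Real.rpow_pos_of_pos hMR0 _
  set W : ℝ := (M:ℝ)^β * g / m1 with hWdef
  have hWpos : 0 < W := by positivity
  set R : ℝ := max W 1 with hRdef
  have hRpos : (0:ℝ) < R := lt_of_lt_of_le one_pos (le_max_right _ _)
  set q : ℕ := max 1 ⌈W⌉₊ with hqdef
  have hq1 : 1 ≤ q := le_max_left _ _
  have hqR : R ≤ (q:ℝ) := by
    apply max_le
    · exact le_trans (Nat.le_ceil W) (by exact_mod_cast le_max_right 1 ⌈W⌉₊)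
    · exact_mod_cast hq1
  -- reindex by j = n / L
  have hsum : ∑ n ∈ F, (m1:ℝ)^α * (m2:ℝ)^α * (n:ℝ)^(-(2*α))
      = ∑ j ∈ F.image (· / L), (m1:ℝ)^α * (m2:ℝ)^α * (((L*j : ℕ)):ℝ)^(-(2*α)) := by
    rw [Finset.sum_image]
    · apply Finset.sum_congr rfl
      intro n hn
      obtain ⟨hn0, h1, h2, _⟩ := hF n hn
      have hLn : L ∣ n := Nat.lcm_dvd h1 h2
      rw [Nat.mul_div_cancel' hLn]
    · intro a ha b hb hab
      obtain ⟨ha0, ha1, ha2, _⟩ := hF a ha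
      obtain ⟨hb0, hb1, hb2, _⟩ := hF b hb
      have hLa : L ∣ a := Nat.lcm_dvd ha1 ha2
      have hLb : L ∣ b := Nat.lcm_dvd hb1 hb2
      calc a = L * (a / L) := (Nat.mul_div_cancel' hLa).symm
        _ = L * (b / L) := by rw [show a / L = b / L from hab]
        _ = b := Nat.mul_div_cancel' hLb
  have himg : ∀ j ∈ F.image (· / L), q ≤ j := by
    intro j hj
    obtain ⟨n, hn, rfl⟩ := Finset.mem_image.1 hj
    obtain ⟨hn0, h1, h2, hc⟩ := hF n hn
    have hLn : L ∣ n := Nat.lcm_dvd h1 h2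
    have hnL : (n:ℝ) = (L:ℝ) * ((n/L : ℕ):ℝ) := by
      exact_mod_cast congrArg (Nat.cast (R := ℝ)) (Nat.mul_div_cancel' hLn).symm
    have hj1 : 1 ≤ n / L := Nat.one_le_div_iff hL |>.2 (Nat.le_of_dvd hn0 hLn)
    have hjW : W ≤ ((n/L : ℕ):ℝ) := by
      -- W = M^β * g / m1 = M^β * m2 / L
      have hWL : W = (M:ℝ)^β * m2 / L := by
        rw [hWdef]
        rw [div_eq_div_iff (ne_of_gt hm1R) (ne_of_gt hLR)]
        linear_combination (M:ℝ)^β * hgL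
      rw [hWL, div_le_iff₀ hLR]
      calc (M:ℝ)^β * m2 ≤ (n:ℝ) := hc
        _ = ((n/L : ℕ):ℝ) * L := by rw [hnL]; ring
    apply max_le
    · exact hj1
    · exact Nat.ceil_le.2 (le_trans hjW (by exact_mod_cast le_refl _))
  -- apply the tail bound
  have he : 1 < 2*α := by linarith
  have htail : ∑ j ∈ F.image (· / L), (j:ℝ)^(-(2*α))
      ≤ (1 + 1/(2*α-1)) * (q:ℝ)^(1-2*α) := by
    have := tail_sum (2*α) he q hq1 (F.image (· / L)) himg
    calc ∑ j ∈ F.image (· / L), (j:ℝ)^(-(2*α)) ≤ (1 + 1/(2*α-1)) * (q:ℝ)^(1-(2*α)) := this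
      _ = (1 + 1/(2*α-1)) * (q:ℝ)^(1-2*α) := by norm_num
  -- the main algebraic bound
  have halg : (m1:ℝ)^α * (m2:ℝ)^α * (L:ℝ)^(-(2*α)) * R^(1-2*α) ≤ (M:ℝ)^(-κ) := by
    have hX : (0:ℝ) < (m1:ℝ)^α * (m2:ℝ)^α * (L:ℝ)^(-(2*α)) * R^(1-2*α) := by positivity
    have hY : (0:ℝ) < (M:ℝ)^(-κ) := Real.rpow_pos_of_pos hMR0 _
    rw [← Real.log_le_log_iff hX hY]
    rw [Real.log_mul (by positivity) (by positivity), Real.log_mul (by positivity) (by positivity),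
      Real.log_mul (by positivity) (by positivity)]
    rw [Real.log_rpow hm1R, Real.log_rpow hm2R, Real.log_rpow hLR, Real.log_rpow hRpos,
      Real.log_rpow hMR0]
    set l1 := Real.log m1
    set l2 := Real.log m2
    set lg := Real.log g
    set lM := Real.log M
    have hlL : Real.log L = l1 + l2 - lg := by
      have := Real.log_mul (ne_of_gt hgR) (ne_of_gt hLR)
      rw [hgL, Real.log_mul (ne_of_gt hm1R) (ne_of_gt hm2R)] at this
      linarith
    have hl12 : l1 ≤ l2 := Real.log_le_log hm1R (by exact_mod_cast hm12)
    have hlg1 : lg ≤ l1 := Real.log_le_log hgR (by exact_mod_cast hgm1)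
    have hlM0 : 0 ≤ lM := Real.log_nonneg hMR
    have hα0 : (0:ℝ) ≤ α := by linarith
    rw [hlL, hκ]
    rcases le_or_gt 1 W with hW1 | hW1
    · -- R = W
      have hRW : R = W := max_eq_left hW1
      have hlR : Real.log R = β * lM + lg - l1 := by
        rw [hRW, hWdef, Real.log_div (by positivity) (ne_of_gt hm1R),
          Real.log_mul (by positivity) (ne_of_gt hgR), Real.log_rpow hMR0]
      rw [hlR]
      linarith [mul_nonneg hα0 (sub_nonneg.2 hl12), mul_le_mul_of_nonneg_left hlg1 hα0]
    · -- R = 1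
      have hRW : R = 1 := max_eq_right hW1.le
      have hlW : β * lM + lg - l1 ≤ 0 := by
        have : Real.log W ≤ 0 := Real.log_nonpos hWpos.le hW1.le
        rw [hWdef, Real.log_div (by positivity) (ne_of_gt hm1R),
          Real.log_mul (by positivity) (ne_of_gt hgR), Real.log_rpow hMR0] at this
        linarith
      rw [hRW, Real.log_one]
      linarith [mul_le_mul_of_nonneg_left hlW (by linarith : (0:ℝ) ≤ 2*α),
        mul_nonneg hα0 (sub_nonneg.2 hl12), mul_nonneg (le_of_lt hβpos) hlM0]
  -- assemble
  have hC0 : (0:ℝ) ≤ 1 + 1/(2*α-1) := by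
    have : (0:ℝ) < 1/(2*α-1) := one_div_pos.2 (by linarith)
    linarith
  calc ∑ n ∈ F, (m1:ℝ)^α * (m2:ℝ)^α * (n:ℝ)^(-(2*α))
      = (m1:ℝ)^α * (m2:ℝ)^α * (L:ℝ)^(-(2*α)) * ∑ j ∈ F.image (· / L), (j:ℝ)^(-(2*α)) := by
        rw [hsum, Finset.mul_sum]
        apply Finset.sum_congr rfl
        intro j hj
        have hj1 : 1 ≤ j := le_trans hq1 (himg j hj)
        have hjR : (0:ℝ) < j := by exact_mod_cast hj1
        push_cast
        rw [Real.mul_rpow hLR.le hjR.le]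
        ring
    _ ≤ (m1:ℝ)^α * (m2:ℝ)^α * (L:ℝ)^(-(2*α)) * ((1 + 1/(2*α-1)) * (q:ℝ)^(1-2*α)) := by
        apply mul_le_mul_of_nonneg_left htail (by positivity)
    _ ≤ (m1:ℝ)^α * (m2:ℝ)^α * (L:ℝ)^(-(2*α)) * ((1 + 1/(2*α-1)) * R^(1-2*α)) := by
        apply mul_le_mul_of_nonneg_left _ (by positivity)
        apply mul_le_mul_of_nonneg_left _ hC0
        exact Real.rpow_le_rpow_of_nonpos hRpos hqR (by linarith)
    _ = (1 + 1/(2*α-1)) * ((m1:ℝ)^α * (m2:ℝ)^α * (L:ℝ)^(-(2*α)) * R^(1-2*α)) := by ring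
    _ ≤ (1 + 1/(2*α-1)) * (M:ℝ)^(-κ) := mul_le_mul_of_nonneg_left halg hC0

lemma vv_eq (α : ℝ) (n m1 m2 : ℕ) (h1 : m1 ∣ n) (h2 : m2 ∣ n) (hn : 0 < n)
    (hm1 : 0 < m1) (hm2 : 0 < m2) :
    ((n/m1 : ℕ):ℝ)^(-α) * ((n/m2 : ℕ):ℝ)^(-α) = (m1:ℝ)^α * (m2:ℝ)^α * (n:ℝ)^(-(2*α)) := by
  have hm1R : (0:ℝ) < m1 := by exact_mod_cast hm1
  have hm2R : (0:ℝ) < m2 := by exact_mod_cast hm2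
  have hnR : (0:ℝ) < n := by exact_mod_cast hn
  rw [Nat.cast_div h1 (ne_of_gt hm1R), Nat.cast_div h2 (ne_of_gt hm2R)]
  rw [Real.rpow_neg (by positivity), Real.rpow_neg (by positivity),
    Real.rpow_neg (by positivity), Real.div_rpow hnR.le hm1R.le,
    Real.div_rpow hnR.le hm2R.le,
    show (2:ℝ)*α = α + α by ring, Real.rpow_add hnR]
  have h1' : (0:ℝ) < (n:ℝ)^α := Real.rpow_pos_of_pos hnR _
  have h2' : (0:ℝ) < (m1:ℝ)^α := Real.rpow_pos_of_pos hm1R _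
  have h3' : (0:ℝ) < (m2:ℝ)^α := Real.rpow_pos_of_pos hm2R _
  field_simp

open Classical in
/-- Proposition: with β = p/((2-p)(2α-1)) and S as in the text, the part of
the convolution over large divisors, γ_n = ∑_{d∣n, n/d∈S, d ≥ d(n)^β} x_{n/d}/d^α,
belongs to ℓ². -/
theorem gamma_in_l2
    (α p β : ℝ) (hα : 1 / 2 < α) (hp1 : 1 < p) (hp2 : p < 2)
    (hβ : β = p / ((2 - p) * (2 * α - 1)))
    (S : Set ℕ) (h0 : 0 ∉ S)
    (hS : Summable fun n : S => 1 / ((n : ℕ).divisors.card : ℝ) ^ (p / (2 - p)))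
    (x : ℕ → ℂ) (hx0 : x 0 = 0)
    (hsupp : ∀ n : ℕ, x n ≠ 0 → n ∈ S)
    (hxle : ∀ n : ℕ, ‖x n‖ ≤ 1)
    (hx2 : Summable fun n => ‖x n‖ ^ 2) :
    Summable fun n : ℕ =>
      ‖∑ d ∈ n.divisors.filter
          (fun d => n / d ∈ S ∧ ((n.divisors.card : ℝ)) ^ β ≤ (d : ℝ)),
        x (n / d) / (d : ℂ) ^ (α : ℂ)‖ ^ 2 := by
  classical
  have h2p : (0:ℝ) < 2 - p := by linarith
  have h2a : (0:ℝ) < 2*α - 1 := by linarith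
  set κ : ℝ := p / (2 - p) with hκdef
  have hκpos : 0 < κ := by positivity
  have hβκ : κ = β * (2*α - 1) := by
    rw [hκdef, hβ]; field_simp
  have hβpos : 0 < β := by rw [hβ]; positivity
  set C₀ : ℝ := 1 + 1/(2*α-1) with hC₀def
  have hC₀ : 0 ≤ C₀ := by
    have : (0:ℝ) < 1/(2*α-1) := by positivity
    simp only [hC₀def]; linarith
  set F0 : ℕ → ℝ := fun m => 1 / ((m.divisors.card : ℝ)) ^ κ with hF0def
  have hind : Summable (S.indicator F0) := summable_subtype_iff_indicator.mp hS
  have hindnn : ∀ m, 0 ≤ S.indicator F0 m := by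
    intro m
    apply Set.indicator_nonneg
    intro a _
    positivity
  set K : ℝ := ∑' m, S.indicator F0 m with hKdef
  set X : ℝ := ∑' n, ‖x n‖^2 with hXdef
  have hXnn : 0 ≤ X := tsum_nonneg (fun n => by positivity)
  have hKnn : 0 ≤ K := tsum_nonneg hindnn
  set v : ℕ → ℕ → ℝ := fun n m => ((n/m : ℕ):ℝ)^(-α) with hvdef
  have hvnn : ∀ n m, (0:ℝ) ≤ v n m := fun n m => Real.rpow_nonneg (Nat.cast_nonneg _) _
  set filt2 : ℕ → Finset ℕ :=
    fun n => n.divisors.filter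
      (fun m => m ∈ S ∧ ((n.divisors.card : ℝ)) ^ β ≤ ((n/m : ℕ):ℝ)) with hfilt2def
  -- key bound for a fixed pair (m1, m2)
  have key : ∀ m1 m2 : ℕ, 0 < m1 → 0 < m2 → ∀ F' : Finset ℕ,
      (∀ n ∈ F', 0 < n ∧ m1 ∣ n ∧ m2 ∣ n ∧
        ((max m1.divisors.card m2.divisors.card : ℕ):ℝ)^β * m1 ≤ (n:ℝ) ∧
        ((max m1.divisors.card m2.divisors.card : ℕ):ℝ)^β * m2 ≤ (n:ℝ)) →
      ∑ n ∈ F', (m1:ℝ)^α * (m2:ℝ)^α * (n:ℝ)^(-(2*α)) ≤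
        C₀ * ((max m1.divisors.card m2.divisors.card : ℕ):ℝ)^(-κ) := by
    intro m1 m2 hm1 hm2 F' hF'
    have hM1 : 1 ≤ max m1.divisors.card m2.divisors.card := by
      have : 0 < m1.divisors.card :=
        Finset.card_pos.2 ⟨m1, Nat.mem_divisors_self m1 (Nat.pos_iff_ne_zero.1 hm1)⟩
      omega
    rcases le_total m1 m2 with h | h
    · exact core_sum α β κ hα hβpos hβκ m1 m2 _ hm1 h hM1 F'
        (fun n hn => ⟨(hF' n hn).1, (hF' n hn).2.1, (hF' n hn).2.2.1, (hF' n hn).2.2.2.2⟩)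
    · have hre : ∑ n ∈ F', (m1:ℝ)^α * (m2:ℝ)^α * (n:ℝ)^(-(2*α))
          = ∑ n ∈ F', (m2:ℝ)^α * (m1:ℝ)^α * (n:ℝ)^(-(2*α)) := by
        apply Finset.sum_congr rfl; intro n _; ring
      rw [hre, max_comm m1.divisors.card m2.divisors.card]
      rw [max_comm m1.divisors.card m2.divisors.card] at hF'
      have hM1' : 1 ≤ max m2.divisors.card m1.divisors.card := by
        rw [max_comm]; exact hM1
      exact core_sum α β κ hα hβpos hβκ m2 m1 _ hm2 h hM1' F'
        (fun n hn => ⟨(hF' n hn).1, (hF' n hn).2.2.1, (hF' n hn).2.1, (hF' n hn).2.2.2.1⟩)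
  -- summability criterion
  apply summable_of_sum_le (c := X * (C₀ * K))
  · intro n; positivity
  intro F
  -- Step A: term-wise bound
  have stepA : ∀ n, ‖∑ d ∈ n.divisors.filter
          (fun d => n / d ∈ S ∧ ((n.divisors.card : ℝ)) ^ β ≤ (d : ℝ)),
        x (n / d) / (d : ℂ) ^ (α : ℂ)‖ ^ 2
      ≤ ∑ m1 ∈ filt2 n, ∑ m2 ∈ filt2 n, ‖x m1‖^2 * v n m1 * v n m2 := by
    intro n
    set filt : Finset ℕ := n.divisors.filter
      (fun d => n / d ∈ S ∧ ((n.divisors.card : ℝ)) ^ β ≤ (d : ℝ)) with hfiltdef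
    have hterm : ∀ d ∈ filt, ‖x (n / d) / (d : ℂ) ^ (α : ℂ)‖
        = ‖x (n/d)‖ * (d:ℝ)^(-α) := by
      intro d hd
      have hd0 : 0 < d := Nat.pos_of_mem_divisors (Finset.mem_filter.1 hd).1
      have hdR : (0:ℝ) < (d:ℝ) := by exact_mod_cast hd0
      have hcast : ((d:ℕ):ℂ) = (((d:ℕ):ℝ):ℂ) := by push_cast; rfl
      have hnorm : ‖((d:ℕ):ℂ) ^ (α:ℂ)‖ = (d:ℝ)^α := by
        rw [hcast, Complex.norm_cpow_eq_rpow_re_of_pos hdR,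
          Complex.ofReal_re]
      rw [norm_div, hnorm, Real.rpow_neg hdR.le, div_eq_mul_inv]
    have hA : ‖∑ d ∈ filt, x (n / d) / (d : ℂ) ^ (α : ℂ)‖
        ≤ ∑ d ∈ filt, ‖x (n/d)‖ * (d:ℝ)^(-α) :=
      le_trans (norm_sum_le _ _) (le_of_eq (Finset.sum_congr rfl hterm))
    have hreix : ∀ f : ℕ → ℕ → ℝ, ∑ d ∈ filt, f (n/d) d = ∑ m ∈ filt2 n, f m (n/m) := by
      intro f
      apply Finset.sum_nbij' (i := fun d => n / d) (j := fun m => n / m)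
      · intro d hd
        obtain ⟨hdd, hdS⟩ := Finset.mem_filter.1 hd
        obtain ⟨hdvd, hn0⟩ := Nat.mem_divisors.1 hdd
        refine Finset.mem_filter.2 ⟨Nat.mem_divisors.2 ⟨Nat.div_dvd_of_dvd hdvd, hn0⟩, hdS.1, ?_⟩
        rw [Nat.div_div_self hdvd hn0]
        exact hdS.2
      · intro m hm
        obtain ⟨hmd, hmS⟩ := Finset.mem_filter.1 hm
        obtain ⟨hdvd, hn0⟩ := Nat.mem_divisors.1 hmd
        refine Finset.mem_filter.2 ⟨Nat.mem_divisors.2 ⟨Nat.div_dvd_of_dvd hdvd, hn0⟩, ?_, ?_⟩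
        · rw [Nat.div_div_self hdvd hn0]; exact hmS.1
        · exact hmS.2
      · intro d hd
        obtain ⟨hdd, _⟩ := Finset.mem_filter.1 hd
        obtain ⟨hdvd, hn0⟩ := Nat.mem_divisors.1 hdd
        exact Nat.div_div_self hdvd hn0
      · intro m hm
        obtain ⟨hmd, _⟩ := Finset.mem_filter.1 hm
        obtain ⟨hdvd, hn0⟩ := Nat.mem_divisors.1 hmd
        exact Nat.div_div_self hdvd hn0
      · intro d hd
        obtain ⟨hdd, -⟩ := Finset.mem_filter.1 hd
        obtain ⟨hdvd, hn0⟩ := Nat.mem_divisors.1 hdd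
        rw [Nat.div_div_self hdvd hn0]
    have hA2 : ∑ d ∈ filt, ‖x (n/d)‖ * (d:ℝ)^(-α) = ∑ m ∈ filt2 n, ‖x m‖ * v n m :=
      hreix (fun m d => ‖x m‖ * (d:ℝ)^(-α))
    have hsq : ‖∑ d ∈ filt, x (n / d) / (d : ℂ) ^ (α : ℂ)‖ ^ 2
        ≤ (∑ m ∈ filt2 n, ‖x m‖ * v n m) ^ 2 := by
      apply pow_le_pow_left₀ (norm_nonneg _)
      rw [← hA2]; exact hA
    refine le_trans hsq ?_
    rw [pow_two, Finset.sum_mul_sum]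
    have hswap : ∑ m1 ∈ filt2 n, ∑ m2 ∈ filt2 n, ‖x m2‖^2 * v n m1 * v n m2
        = ∑ m1 ∈ filt2 n, ∑ m2 ∈ filt2 n, ‖x m1‖^2 * v n m1 * v n m2 := by
      rw [Finset.sum_comm]
      apply Finset.sum_congr rfl; intro m1 _
      apply Finset.sum_congr rfl; intro m2 _
      ring
    calc ∑ m1 ∈ filt2 n, ∑ m2 ∈ filt2 n, (‖x m1‖ * v n m1) * (‖x m2‖ * v n m2)
        ≤ ∑ m1 ∈ filt2 n, ∑ m2 ∈ filt2 n,
            (‖x m1‖^2 * v n m1 * v n m2 + ‖x m2‖^2 * v n m1 * v n m2) / 2 := by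
          apply Finset.sum_le_sum; intro m1 _
          apply Finset.sum_le_sum; intro m2 _
          have h1 : ‖x m1‖ * ‖x m2‖ ≤ (‖x m1‖^2 + ‖x m2‖^2)/2 := by
            nlinarith [sq_nonneg (‖x m1‖ - ‖x m2‖)]
          have h2 : (0:ℝ) ≤ v n m1 * v n m2 := mul_nonneg (hvnn n m1) (hvnn n m2)
          calc (‖x m1‖ * v n m1) * (‖x m2‖ * v n m2)
              = (‖x m1‖ * ‖x m2‖) * (v n m1 * v n m2) := by ring
            _ ≤ ((‖x m1‖^2 + ‖x m2‖^2)/2) * (v n m1 * v n m2) :=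
                mul_le_mul_of_nonneg_right h1 h2
            _ = (‖x m1‖^2 * v n m1 * v n m2 + ‖x m2‖^2 * v n m1 * v n m2) / 2 := by ring
      _ = (∑ m1 ∈ filt2 n, ∑ m2 ∈ filt2 n, ‖x m1‖^2 * v n m1 * v n m2) / 2
          + (∑ m1 ∈ filt2 n, ∑ m2 ∈ filt2 n, ‖x m2‖^2 * v n m1 * v n m2) / 2 := by
          rw [← add_div, ← Finset.sum_add_distrib, Finset.sum_div]
          apply Finset.sum_congr rfl; intro m1 _
          rw [← Finset.sum_add_distrib, ← Finset.sum_div]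
      _ = ∑ m1 ∈ filt2 n, ∑ m2 ∈ filt2 n, ‖x m1‖^2 * v n m1 * v n m2 := by
          rw [hswap]; ring
  refine le_trans (Finset.sum_le_sum (fun n _ => stepA n)) ?_
  -- Step E: reorganize the triple sum
  set G := F.biUnion (fun n => n.divisors) with hGdef
  have hsubG : ∀ n ∈ F, filt2 n ⊆ G := by
    intro n hn m hm
    exact Finset.mem_biUnion.2 ⟨n, hn, (Finset.mem_filter.1 hm).1⟩
  have hrw : ∀ n ∈ F, ∑ m1 ∈ filt2 n, ∑ m2 ∈ filt2 n, ‖x m1‖^2 * v n m1 * v n m2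
      = ∑ m1 ∈ G, ∑ m2 ∈ G, (if m1 ∈ filt2 n ∧ m2 ∈ filt2 n
          then ‖x m1‖^2 * v n m1 * v n m2 else 0) := by
    intro n hn
    have hsub := hsubG n hn
    have e1 : ∀ h : ℕ → ℝ, ∑ m ∈ filt2 n, h m = ∑ m ∈ G, if m ∈ filt2 n then h m else 0 := by
      intro h
      rw [← Finset.sum_filter, Finset.filter_mem_eq_inter, Finset.inter_eq_right.2 hsub]
    rw [e1 (fun m1 => ∑ m2 ∈ filt2 n, ‖x m1‖^2 * v n m1 * v n m2)]
    apply Finset.sum_congr rfl; intro m1 _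
    by_cases h1 : m1 ∈ filt2 n
    · simp only [h1, if_true, true_and]
      exact e1 (fun m2 => ‖x m1‖^2 * v n m1 * v n m2)
    · simp [h1]
  rw [Finset.sum_congr rfl hrw]
  rw [Finset.sum_comm]
  have hcomm2 : ∑ m1 ∈ G, ∑ n ∈ F, ∑ m2 ∈ G, (if m1 ∈ filt2 n ∧ m2 ∈ filt2 n
          then ‖x m1‖^2 * v n m1 * v n m2 else 0)
      = ∑ m1 ∈ G, ∑ m2 ∈ G, ∑ n ∈ F, (if m1 ∈ filt2 n ∧ m2 ∈ filt2 n
          then ‖x m1‖^2 * v n m1 * v n m2 else 0) := by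
    apply Finset.sum_congr rfl; intro m1 _
    exact Finset.sum_comm
  rw [hcomm2]
  -- Step F: bound the inner sum for each pair
  have inner : ∀ m1 ∈ G, ∀ m2 ∈ G,
      ∑ n ∈ F, (if m1 ∈ filt2 n ∧ m2 ∈ filt2 n
          then ‖x m1‖^2 * v n m1 * v n m2 else 0)
      ≤ ‖x m1‖^2 * (C₀ * S.indicator F0 m2) := by
    intro m1 _ m2 _
    rw [← Finset.sum_filter]
    set F' := F.filter (fun n => m1 ∈ filt2 n ∧ m2 ∈ filt2 n) with hF'def
    rcases Finset.eq_empty_or_nonempty F' with hFe | ⟨n0, hn0⟩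
    · rw [hFe, Finset.sum_empty]
      exact mul_nonneg (by positivity) (mul_nonneg hC₀ (hindnn m2))
    · obtain ⟨-, hw1, hw2⟩ := Finset.mem_filter.1 hn0
      obtain ⟨hw1d, hw1S, -⟩ := Finset.mem_filter.1 hw1
      obtain ⟨hw2d, hw2S, -⟩ := Finset.mem_filter.1 hw2
      have hm1pos : 0 < m1 := Nat.pos_of_mem_divisors hw1d
      have hm2pos : 0 < m2 := Nat.pos_of_mem_divisors hw2d
      have hFn : ∀ n ∈ F', 0 < n ∧ m1 ∣ n ∧ m2 ∣ n ∧
          ((max m1.divisors.card m2.divisors.card : ℕ):ℝ)^β * m1 ≤ (n:ℝ) ∧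
          ((max m1.divisors.card m2.divisors.card : ℕ):ℝ)^β * m2 ≤ (n:ℝ) := by
        intro n hn
        obtain ⟨-, h1, h2⟩ := Finset.mem_filter.1 hn
        obtain ⟨h1d, -, h1β⟩ := Finset.mem_filter.1 h1
        obtain ⟨h2d, -, h2β⟩ := Finset.mem_filter.1 h2
        obtain ⟨hdvd1, hn0'⟩ := Nat.mem_divisors.1 h1d
        obtain ⟨hdvd2, -⟩ := Nat.mem_divisors.1 h2d
        have hnpos : 0 < n := Nat.pos_of_ne_zero hn0'
        have hcard : ((max m1.divisors.card m2.divisors.card : ℕ):ℝ)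
            ≤ ((n.divisors.card : ℕ):ℝ) := by
          have c1 : m1.divisors.card ≤ n.divisors.card :=
            Finset.card_le_card (Nat.divisors_subset_of_dvd hn0' hdvd1)
          have c2 : m2.divisors.card ≤ n.divisors.card :=
            Finset.card_le_card (Nat.divisors_subset_of_dvd hn0' hdvd2)
          exact_mod_cast max_le c1 c2
        have hMβ : ((max m1.divisors.card m2.divisors.card : ℕ):ℝ)^β
            ≤ ((n.divisors.card : ℝ))^β :=
          Real.rpow_le_rpow (Nat.cast_nonneg _) hcard hβpos.le
        refine ⟨hnpos, hdvd1, hdvd2, ?_, ?_⟩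
        · have hmulc : ((n/m1 : ℕ):ℝ) * m1 = (n:ℝ) := by
            exact_mod_cast congrArg (Nat.cast (R := ℝ)) (Nat.div_mul_cancel hdvd1)
          calc ((max m1.divisors.card m2.divisors.card : ℕ):ℝ)^β * m1
              ≤ ((n/m1 : ℕ):ℝ) * m1 :=
                mul_le_mul_of_nonneg_right (le_trans hMβ h1β) (Nat.cast_nonneg _)
            _ = (n:ℝ) := hmulc
        · have hmulc : ((n/m2 : ℕ):ℝ) * m2 = (n:ℝ) := by
            exact_mod_cast congrArg (Nat.cast (R := ℝ)) (Nat.div_mul_cancel hdvd2)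
          calc ((max m1.divisors.card m2.divisors.card : ℕ):ℝ)^β * m2
              ≤ ((n/m2 : ℕ):ℝ) * m2 :=
                mul_le_mul_of_nonneg_right (le_trans hMβ h2β) (Nat.cast_nonneg _)
            _ = (n:ℝ) := hmulc
      have hsummand : ∀ n ∈ F', ‖x m1‖^2 * v n m1 * v n m2
          = ‖x m1‖^2 * ((m1:ℝ)^α * (m2:ℝ)^α * (n:ℝ)^(-(2*α))) := by
        intro n hn
        obtain ⟨hp, h1, h2, -, -⟩ := hFn n hn
        rw [mul_assoc]
        congr 1
        exact vv_eq α n m1 m2 h1 h2 hp hm1pos hm2pos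
      rw [Finset.sum_congr rfl hsummand, ← Finset.mul_sum]
      apply mul_le_mul_of_nonneg_left _ (by positivity)
      refine le_trans (key m1 m2 hm1pos hm2pos F' hFn) ?_
      apply mul_le_mul_of_nonneg_left _ hC₀
      rw [Set.indicator_of_mem hw2S]
      have hDm2pos : (0:ℝ) < (m2.divisors.card : ℝ) := by
        have : 0 < m2.divisors.card :=
          Finset.card_pos.2 ⟨m2, Nat.mem_divisors_self m2 (Nat.pos_iff_ne_zero.1 hm2pos)⟩
        exact_mod_cast this
      have hle : (m2.divisors.card : ℝ) ≤ ((max m1.divisors.card m2.divisors.card : ℕ):ℝ) := by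
        exact_mod_cast le_max_right m1.divisors.card m2.divisors.card
      have hmono := Real.rpow_le_rpow_of_nonpos hDm2pos hle (neg_nonpos.2 hκpos.le)
      calc ((max m1.divisors.card m2.divisors.card : ℕ):ℝ)^(-κ)
          ≤ ((m2.divisors.card : ℝ))^(-κ) := hmono
        _ = F0 m2 := by
            simp only [hF0def]
            rw [Real.rpow_neg hDm2pos.le, one_div]
  -- Step G: conclude
  calc ∑ m1 ∈ G, ∑ m2 ∈ G, ∑ n ∈ F, (if m1 ∈ filt2 n ∧ m2 ∈ filt2 n
          then ‖x m1‖^2 * v n m1 * v n m2 else 0)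
      ≤ ∑ m1 ∈ G, ∑ m2 ∈ G, ‖x m1‖^2 * (C₀ * S.indicator F0 m2) := by
        apply Finset.sum_le_sum; intro m1 h1
        apply Finset.sum_le_sum; intro m2 h2
        exact inner m1 h1 m2 h2
    _ = (∑ m1 ∈ G, ‖x m1‖^2) * (C₀ * ∑ m2 ∈ G, S.indicator F0 m2) := by
        rw [Finset.mul_sum, Finset.sum_mul_sum]
    _ ≤ X * (C₀ * K) := by
        have hsum1 : ∑ m1 ∈ G, ‖x m1‖^2 ≤ X :=
          hx2.sum_le_tsum G (fun i _ => by positivity)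
        have hsum2 : ∑ m2 ∈ G, S.indicator F0 m2 ≤ K :=
          hind.sum_le_tsum G (fun i _ => hindnn i)
        have h1nn : (0:ℝ) ≤ ∑ m1 ∈ G, ‖x m1‖^2 :=
          Finset.sum_nonneg (fun i _ => by positivity)
        apply mul_le_mul hsum1 (mul_le_mul_of_nonneg_left hsum2 hC₀)
          (mul_nonneg hC₀ (Finset.sum_nonneg (fun i _ => hindnn i))) hXnn
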